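/- arXiv:2505.13299 — 2 statements merged into one kernel-verified Lean document; each statement's English description precedes it below -/
import Mathlib

section
/- Lipschitz dependence of the iterates on the quantile level: for any index 1 ≤ i ≤ p, any quantile levels τ ≤ τ' and any k ∈ ℕ, the smoothed SGD iterates satisfy 0 ≤ Y_{i,k}(τ') − Y_{i,k}(τ) ≤ (Σ_{j=1}^{k−1} γ_j)(τ' − τ) ≤ c_γ (1−β)^{−1} k^{1−β} (τ' − τ). (This holds for arbitrary real inputs X_{i,k}.) -/
open Real

/-- The piecewise-linear smoothing of the indicator function. -/
noncomputable def gfun (x : ℝ) : ℝ :=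
  if 1 ≤ x then 1 else if -1 ≤ x then (x + 1) / 2 else 0

/-- Rescaled smoothing function `g_h(x) = g(x/h)`. -/
noncomputable def gsm (h x : ℝ) : ℝ := gfun (x / h)

/-- Learning rate `γ_k = c_γ k^{-β}`. -/
noncomputable def gam (cγ β : ℝ) (k : ℕ) : ℝ := cγ * (k : ℝ) ^ (-β)

lemma gfun_mono {x y : ℝ} (h : x ≤ y) : gfun x ≤ gfun y := by
  unfold gfun; split_ifs <;> linarith

lemma gfun_lip {x y : ℝ} (h : x ≤ y) : gfun y - gfun x ≤ (y - x) / 2 := by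
  unfold gfun; split_ifs <;> linarith

lemma gsm_mono {h x y : ℝ} (hh : 0 < h) (hxy : x ≤ y) : gsm h x ≤ gsm h y :=
  gfun_mono (div_le_div_of_nonneg_right hxy hh.le)

lemma gsm_lip {h x y : ℝ} (hh : 0 < h) (hxy : x ≤ y) :
    gsm h y - gsm h x ≤ (y - x) / (2 * h) := by
  have := gfun_lip (div_le_div_of_nonneg_right hxy hh.le)
  unfold gsm
  calc gfun (y / h) - gfun (x / h) ≤ (y / h - x / h) / 2 := this
    _ = (y - x) / (2 * h) := by rw [← sub_div, div_div, mul_comm]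

/-- key sum bound: ∑_{j=1}^m j^{-β} ≤ (1-β)⁻¹ m^{1-β} -/
lemma sum_rpow_le {β : ℝ} (hβ0 : 0 < β) (hβ2 : β < 1) (m : ℕ) :
    ∑ j ∈ Finset.Icc 1 m, (j : ℝ) ^ (-β) ≤ (1 - β)⁻¹ * (m : ℝ) ^ (1 - β) := by
  induction m with
  | zero => simp [Real.zero_rpow (by linarith : (1:ℝ)-β ≠ 0)]
  | succ n ih =>
    rw [Finset.sum_Icc_succ_top (by omega)]
    have hc : (0:ℝ) < 1 - β := by linarith
    have hn1 : (0:ℝ) < (n:ℝ) + 1 := by positivity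
    -- key: (n:ℝ)^(1-β) + (1-β) * (n+1)^(-β) ≤ (n+1)^(1-β)
    have key : (n:ℝ) ^ (1-β) + (1-β) * ((n:ℝ)+1) ^ (-β) ≤ ((n:ℝ)+1) ^ (1-β) := by
      have hs : (-1:ℝ) ≤ -(1 / ((n:ℝ)+1)) := by
        rw [neg_le_neg_iff]
        exact div_le_one_of_le₀ (by linarith) (by linarith)
      have hb := rpow_one_add_le_one_add_mul_self hs hc.le (by linarith)
      -- (1 - 1/(n+1))^(1-β) ≤ 1 - (1-β)/(n+1)
      have h1 : (1:ℝ) + -(1 / ((n:ℝ)+1)) = (n:ℝ) / ((n:ℝ)+1) := by field_simp; ring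
      rw [h1] at hb
      have hmul := mul_le_mul_of_nonneg_left hb
        (le_of_lt (rpow_pos_of_pos hn1 (1-β)))
      have hdiv : ((n:ℝ) / ((n:ℝ)+1)) ^ (1-β) = (n:ℝ) ^ (1-β) / ((n:ℝ)+1) ^ (1-β) := by
        rw [div_rpow (by positivity) hn1.le]
      rw [hdiv] at hmul
      have hpos : (0:ℝ) < ((n:ℝ)+1) ^ (1-β) := rpow_pos_of_pos hn1 _
      have e1 : ((n:ℝ)+1) ^ (1-β) * ((n:ℝ) ^ (1-β) / ((n:ℝ)+1) ^ (1-β)) = (n:ℝ) ^ (1-β) := by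
        field_simp
      have e2 : ((n:ℝ)+1) ^ (1-β) * (1 + (1-β) * -(1 / ((n:ℝ)+1)))
          = ((n:ℝ)+1) ^ (1-β) - (1-β) * ((n:ℝ)+1) ^ (-β) := by
        have : ((n:ℝ)+1) ^ (1-β) / ((n:ℝ)+1) = ((n:ℝ)+1) ^ (-β) := by
          rw [← rpow_sub_one hn1.ne']
          norm_num
        rw [← this]
        ring
      rw [e1, e2] at hmul
      linarith
    have cast1 : ((n+1 : ℕ) : ℝ) = (n:ℝ) + 1 := by push_cast; ring
    rw [cast1]
    have := mul_le_mul_of_nonneg_left key (le_of_lt (inv_pos.mpr hc))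
    calc ∑ j ∈ Finset.Icc 1 n, (j:ℝ) ^ (-β) + ((n:ℝ)+1) ^ (-β)
        ≤ (1-β)⁻¹ * (n:ℝ) ^ (1-β) + ((n:ℝ)+1) ^ (-β) := by linarith
      _ ≤ (1-β)⁻¹ * ((n:ℝ)+1) ^ (1-β) := by
          have h3 : (1-β)⁻¹ * ((1-β) * ((n:ℝ)+1) ^ (-β)) = ((n:ℝ)+1) ^ (-β) := by
            field_simp
          nlinarith [this]

/-- **Lipschitz dependence of the iterates on the quantile level**:
for any index `1 ≤ i ≤ p`, any quantile levels `τ ≤ τ'` and any `k ∈ ℕ`,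
`0 ≤ Y_{i,k}(τ') − Y_{i,k}(τ) ≤ (Σ_{j=1}^{k−1} γ_j)(τ' − τ)
  ≤ c_γ (1−β)⁻¹ k^{1−β} (τ' − τ)`.
This holds for arbitrary real inputs `X_{i,k}`. -/
theorem smoothed_sgd_lipschitz_in_tau
    (p : ℕ) (cγ β a : ℝ) (hcγ : 0 < cγ) (hβ1 : 1 / 2 < β) (hβ2 : β < 1)
    (ha : 1 / 2 < a)
    (X : ℕ → ℕ → ℝ) (y : ℕ → ℝ)
    (Y : ℕ → ℕ → ℝ → ℝ)
    (hY1 : ∀ i τ, Y i 1 τ = y i)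
    (hYrec : ∀ i k τ, 1 ≤ k →
      Y i (k + 1) τ =
        Y i k τ + gam cγ β k * (τ - gsm (a * gam cγ β k) (Y i k τ - X i (k + 1))))
    (i : ℕ) (hi1 : 1 ≤ i) (hip : i ≤ p)
    (τ τ' : ℝ) (hττ' : τ ≤ τ') (k : ℕ) (hk : 1 ≤ k) :
    0 ≤ Y i k τ' - Y i k τ ∧
      Y i k τ' - Y i k τ ≤ (∑ j ∈ Finset.Icc 1 (k - 1), gam cγ β j) * (τ' - τ) ∧
      (∑ j ∈ Finset.Icc 1 (k - 1), gam cγ β j) * (τ' - τ) ≤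
        cγ * (1 - β)⁻¹ * (k : ℝ) ^ (1 - β) * (τ' - τ) := by
  have hβ0 : (0:ℝ) < β := by linarith
  -- main induction: for all m, bounds at k = m+1 with sum over Icc 1 m
  have main : ∀ m : ℕ, 0 ≤ Y i (m+1) τ' - Y i (m+1) τ ∧
      Y i (m+1) τ' - Y i (m+1) τ ≤ (∑ j ∈ Finset.Icc 1 m, gam cγ β j) * (τ' - τ) := by
    intro m
    induction m with
    | zero => simp [hY1]
    | succ n ih =>
      obtain ⟨ih1, ih2⟩ := ih
      have hn1 : 1 ≤ n + 1 := by omega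
      have hγpos : 0 < gam cγ β (n+1) := by
        unfold gam
        positivity
      set γ := gam cγ β (n+1) with hγ
      have hhpos : 0 < a * γ := by
        apply mul_pos (by linarith) hγpos
      set u := Y i (n+1) τ - X i (n+1+1) with hu
      set u' := Y i (n+1) τ' - X i (n+1+1) with hu'
      have huu : u ≤ u' := by simp only [hu, hu']; linarith
      have hrec := hYrec i (n+1) τ hn1
      have hrec' := hYrec i (n+1) τ' hn1
      have hgm : gsm (a*γ) u ≤ gsm (a*γ) u' := gsm_mono hhpos huu
      have hgl : gsm (a*γ) u' - gsm (a*γ) u ≤ (u' - u) / (2 * (a*γ)) :=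
        gsm_lip hhpos huu
      have hdiff : Y i (n+1+1) τ' - Y i (n+1+1) τ
          = (Y i (n+1) τ' - Y i (n+1) τ) + γ * (τ' - τ)
            - γ * (gsm (a*γ) u' - gsm (a*γ) u) := by
        rw [hrec, hrec']; ring
      constructor
      · rw [hdiff]
        have h1 : γ * (gsm (a*γ) u' - gsm (a*γ) u) ≤ γ * ((u' - u) / (2 * (a*γ))) :=
          mul_le_mul_of_nonneg_left hgl hγpos.le
        have h2 : γ * ((u' - u) / (2 * (a*γ))) = (u' - u) / (2*a) := by
          field_simp
        have h3 : (u' - u) / (2*a) ≤ u' - u := by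
          rw [div_le_iff₀ (by linarith)]
          nlinarith [sub_nonneg.mpr huu]
        have h4 : u' - u = Y i (n+1) τ' - Y i (n+1) τ := by simp [hu, hu']
        nlinarith [mul_nonneg hγpos.le (sub_nonneg.mpr hττ')]
      · rw [hdiff, Finset.sum_Icc_succ_top (by omega : 1 ≤ n + 1)]
        have h5 : 0 ≤ γ * (gsm (a*γ) u' - gsm (a*γ) u) :=
          mul_nonneg hγpos.le (by linarith)
        rw [← hγ]
        nlinarith
  obtain ⟨m, rfl⟩ : ∃ m, k = m + 1 := ⟨k - 1, by omega⟩
  obtain ⟨h1, h2⟩ := main m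
  have hmsimp : m + 1 - 1 = m := by omega
  rw [hmsimp]
  refine ⟨h1, h2, ?_⟩
  apply mul_le_mul_of_nonneg_right _ (sub_nonneg.mpr hττ')
  have hsum : ∑ j ∈ Finset.Icc 1 m, gam cγ β j
      = cγ * ∑ j ∈ Finset.Icc 1 m, (j:ℝ) ^ (-β) := by
    rw [Finset.mul_sum]; rfl
  rw [hsum]
  have h6 := sum_rpow_le hβ0 hβ2 m
  have h7 : (m:ℝ) ^ (1-β) ≤ ((m+1:ℕ):ℝ) ^ (1-β) := by
    apply rpow_le_rpow (Nat.cast_nonneg m) (by push_cast; linarith) (by linarith)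
  have hc : (0:ℝ) < (1-β)⁻¹ := inv_pos.mpr (by linarith)
  calc cγ * ∑ j ∈ Finset.Icc 1 m, (j:ℝ) ^ (-β)
      ≤ cγ * ((1-β)⁻¹ * (m:ℝ) ^ (1-β)) := mul_le_mul_of_nonneg_left h6 hcγ.le
    _ = cγ * (1-β)⁻¹ * (m:ℝ) ^ (1-β) := by ring
    _ ≤ cγ * (1-β)⁻¹ * ((m+1:ℕ):ℝ) ^ (1-β) :=
        mul_le_mul_of_nonneg_left h7 (by positivity)
end

section
/- Remainder bound for the linearization (inequality (eq:rhoikbddtwoparts) in pointwise form): under Assumption 1, for every 1 ≤ i ≤ p, every τ ∈ [τ0, τ1], every k ≥ 1 and every y ∈ ℝ, | F_i(Q_i(τ)) − E[g_{aγ_k}(y − X_{i,k+1})] + f_i(Q_i(τ)) (y − Q_i(τ)) | ≤ 2 a c_f γ_k + c_f (y − Q_i(τ))². -/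
open MeasureTheory ProbabilityTheory Real

lemma gfun_meas : Measurable gfun := by
  unfold gfun
  apply Measurable.ite (measurableSet_le measurable_const measurable_id) measurable_const
  exact Measurable.ite (measurableSet_le measurable_const measurable_id)
    (by fun_prop) measurable_const

lemma gfun_mem (x : ℝ) : gfun x ∈ Set.Icc (0:ℝ) 1 := by
  unfold gfun
  split_ifs with h1 h2 <;> constructor <;> (try push_neg at *) <;> nlinarith

lemma gfun_one {x : ℝ} (hx : 1 ≤ x) : gfun x = 1 := by simp [gfun, hx]

lemma gfun_zero {x : ℝ} (hx : x < -1) : gfun x = 0 := by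
  have h1 : ¬ (1 ≤ x) := by linarith
  have h2 : ¬ (-1 ≤ x) := by linarith
  simp [gfun, h1, h2]

set_option maxHeartbeats 1000000 in

/-- **Remainder bound for the linearization** (inequality (eq:rhoikbddtwoparts) in
pointwise form): under Assumption 1, for every `1 ≤ i ≤ p`, `τ ∈ [τ0, τ1]`, `k ≥ 1`
and `y ∈ ℝ`,
`| F_i(Q_i(τ)) − E[g_{aγ_k}(y − X_{i,k+1})] + f_i(Q_i(τ)) (y − Q_i(τ)) |
  ≤ 2 a c_f γ_k + c_f (y − Q_i(τ))²`. -/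
theorem smoothed_sgd_linearization_remainder
    (τ0 τ1 cγ β a cL cf M : ℝ)
    (hτ0 : 0 < τ0) (hτ01 : τ0 < τ1) (hτ1 : τ1 < 1)
    (hcγ : 0 < cγ) (hβ1 : 1 / 2 < β) (hβ2 : β < 1) (ha : 1 / 2 < a)
    (hcL : 0 < cL) (hcf : 0 < cf)
    (p : ℕ) (Ω : Type) [MeasurableSpace Ω] (μ : Measure Ω) [IsProbabilityMeasure μ]
    (X : ℕ → ℕ → Ω → ℝ) (F f f' : ℕ → ℝ → ℝ) (Q : ℕ → ℝ → ℝ)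
    (hXmeas : ∀ i k, Measurable (X i k))
    -- the X_{i,k}, k ≥ 1, are independent and identically distributed
    (hindep : ∀ i, iIndepFun (fun k => X i k) μ)
    (hident : ∀ i k, 1 ≤ k → Measure.map (X i k) μ = Measure.map (X i 1) μ)
    -- F_i is the cdf of X_{i,1}
    (hcdf : ∀ i x, F i x = (μ {ω | X i 1 ω ≤ x}).toReal)
    -- X_{i,1} has density f_i with derivative f_i'
    (hdens : ∀ i, Measure.map (X i 1) μ =
      MeasureTheory.volume.withDensity (fun x => ENNReal.ofReal (f i x)))
    (hderiv : ∀ i x, HasDerivAt (f i) (f' i x) x)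
    -- Assumption 1
    (hfbd : ∀ i x, |f i x| ≤ cf)
    (hf'bd : ∀ i x, |f' i x| ≤ cf)
    (hquant : ∀ i τ, τ0 ≤ τ → τ ≤ τ1 → F i (Q i τ) = τ)
    (hlow : ∀ i τ, 1 ≤ i → i ≤ p → τ0 ≤ τ → τ ≤ τ1 → cL ≤ f i (Q i τ))
    (hQbd : ∀ i τ, 1 ≤ i → i ≤ p → τ0 ≤ τ → τ ≤ τ1 → |Q i τ| ≤ M)
    (i k : ℕ) (hi1 : 1 ≤ i) (hip : i ≤ p) (hk : 1 ≤ k)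
    (τ : ℝ) (hτl : τ0 ≤ τ) (hτu : τ ≤ τ1) (y : ℝ) :
    |F i (Q i τ) - (∫ ω, gsm (a * gam cγ β k) (y - X i (k + 1) ω) ∂μ) +
        f i (Q i τ) * (y - Q i τ)| ≤
      2 * a * cf * gam cγ β k + cf * (y - Q i τ) ^ 2 := by
  -- setup
  set h : ℝ := a * gam cγ β k with hh
  have hγpos : 0 < gam cγ β k := by
    have : (0:ℝ) < (k:ℝ) := by exact_mod_cast hk
    exact mul_pos hcγ (Real.rpow_pos_of_pos this _)
  have hhpos : 0 < h := mul_pos (by linarith) hγpos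
  set ν : Measure ℝ := Measure.map (X i 1) μ with hν
  have hνprob : IsProbabilityMeasure ν := Measure.isProbabilityMeasure_map (hXmeas i 1).aemeasurable
  have hfc : Continuous (f i) := by
    rw [continuous_iff_continuousAt]; exact fun x => (hderiv i x).continuousAt
  set fp : ℝ → ℝ := fun x => max (f i x) 0 with hfp
  have hfpc : Continuous fp := hfc.max continuous_const
  have hofReal : ∀ x, ENNReal.ofReal (f i x) = ENNReal.ofReal (fp x) := by
    intro x
    rcases le_total 0 (f i x) with h0 | h0
    · simp [hfp, max_eq_left h0]
    · simp [hfp, max_eq_right h0, ENNReal.ofReal_of_nonpos h0]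
  set Qi : ℝ := Q i τ with hQi
  -- cdf as measure of Iic
  have hFν : ∀ z, F i z = (ν (Set.Iic z)).toReal := by
    intro z
    rw [hcdf, hν, Measure.map_apply (hXmeas i 1) measurableSet_Iic]
    rfl
  -- cdf as set integral of fp
  have hFint : ∀ z, F i z = ∫ x in Set.Iic z, fp x := by
    intro z
    rw [hFν z, hν, hdens i, withDensity_apply _ measurableSet_Iic]
    have h2 : ∫ x in Set.Iic z, fp x
        = (∫⁻ x in Set.Iic z, ENNReal.ofReal (fp x)).toReal :=
      integral_eq_lintegral_of_nonneg_ae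
        (Filter.Eventually.of_forall fun x => le_max_right _ _)
        hfpc.aestronglyMeasurable
    rw [h2]
    congr 1
    exact lintegral_congr fun x => hofReal x
  -- integrability of fp on Iic sets
  have hfptot : ∫⁻ x, ENNReal.ofReal (fp x) = 1 := by
    have := measure_univ (μ := ν)
    rw [hν, hdens i] at this
    rw [← this, withDensity_apply _ MeasurableSet.univ]
    simp only [Measure.restrict_univ]
    exact (lintegral_congr fun x => (hofReal x).symm)
  have hfpint : Integrable fp := by
    refine ⟨hfpc.aestronglyMeasurable, ?_⟩
    rw [hasFiniteIntegral_iff_norm]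
    have : ∀ x, ENNReal.ofReal ‖fp x‖ = ENNReal.ofReal (fp x) := fun x => by
      rw [Real.norm_eq_abs, abs_of_nonneg (le_max_right _ _)]
    simp only [this, hfptot]
    exact ENNReal.one_lt_top
  -- Taylor part
  have hlip : ∀ x z : ℝ, |f i x - f i z| ≤ cf * |x - z| := by
    intro x z
    have := Convex.norm_image_sub_le_of_norm_hasDerivWithin_le
      (f := f i) (f' := f' i) (C := cf) (s := Set.univ)
      (fun u _ => (hderiv i u).hasDerivWithinAt)
      (fun u _ => by rw [Real.norm_eq_abs]; exact hf'bd i u)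
      convex_univ (Set.mem_univ z) (Set.mem_univ x)
    simpa [Real.norm_eq_abs] using this
  have hfQpos : 0 ≤ f i Qi := le_trans hcL.le (hlow i τ hi1 hip hτl hτu)
  have hfplip : ∀ x : ℝ, |fp x - f i Qi| ≤ cf * |x - Qi| := by
    intro x
    refine le_trans ?_ (hlip x Qi)
    rcases le_total 0 (f i x) with h0 | h0
    · rw [hfp]; simp [max_eq_left h0]
    · rw [hfp]
      simp only [max_eq_right h0]
      rw [abs_of_nonpos (by linarith), abs_of_nonpos (by linarith)]
      linarith
  clear_value fp
  clear hindep hquant hQbd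
  have hFdiff : F i y - F i Qi = ∫ x in Qi..y, fp x := by
    have hio : ∀ z : ℝ, IntegrableOn fp (Set.Iic z) MeasureTheory.volume :=
      fun z => hfpint.integrableOn
    have h3 := intervalIntegral.integral_Iic_sub_Iic (f := fp) (a := Qi) (b := y)
      (μ := MeasureTheory.volume) (hio Qi) (hio y)
    rw [hFint y, hFint Qi, ← h3]
  have hpart1 : |F i Qi - F i y + f i Qi * (y - Qi)| ≤ cf * (y - Qi) ^ 2 := by
    have hconst : ∫ x in Qi..y, f i Qi = f i Qi * (y - Qi) := by
      rw [intervalIntegral.integral_const, smul_eq_mul]; ring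
    have heq : F i Qi - F i y + f i Qi * (y - Qi) = -(∫ x in Qi..y, (fp x - f i Qi)) := by
      rw [intervalIntegral.integral_sub (hfpc.intervalIntegrable _ _)
        (intervalIntegrable_const), hconst]
      linarith [hFdiff]
    rw [heq, abs_neg]
    have hb : ∀ x ∈ Set.uIoc Qi y, ‖fp x - f i Qi‖ ≤ cf * |y - Qi| := by
      intro x hx
      rw [Real.norm_eq_abs]
      refine le_trans (hfplip x) (mul_le_mul_of_nonneg_left ?_ hcf.le)
      rcases Set.mem_uIoc.mp hx with ⟨h1, h2⟩ | ⟨h1, h2⟩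
      · rw [abs_of_pos (by linarith), abs_of_pos (by linarith)]; linarith
      · rw [abs_of_nonpos (by linarith), abs_of_neg (by linarith)]; linarith
    calc |∫ x in Qi..y, (fp x - f i Qi)| ≤ cf * |y - Qi| * |y - Qi| := by
          simpa [Real.norm_eq_abs] using
            intervalIntegral.norm_integral_le_of_norm_le_const hb
      _ = cf * (y - Qi) ^ 2 := by rw [mul_assoc, abs_mul_abs_self]; ring
  -- Part 2: smoothing bias
  have hgmem : ∀ x, gsm h x ∈ Set.Icc (0:ℝ) 1 := fun x => gfun_mem _
  have hgmeas : Measurable fun x : ℝ => gsm h (y - x) := by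
    unfold gsm; exact gfun_meas.comp (by fun_prop)
  have hmap : Measure.map (X i (k+1)) μ = ν := by rw [hν]; exact hident i (k+1) (by omega)
  have hE : (∫ ω, gsm h (y - X i (k + 1) ω) ∂μ) = ∫ x, gsm h (y - x) ∂ν := by
    rw [← hmap]
    exact (integral_map (hXmeas i (k+1)).aemeasurable hgmeas.aestronglyMeasurable).symm
  set φ : ℝ → ℝ := fun x => Set.indicator (Set.Iic y) (fun _ => (1:ℝ)) x - gsm h (y - x) with hφ
  have hFy : F i y = ∫ x, Set.indicator (Set.Iic y) (fun _ => (1:ℝ)) x ∂ν := by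
    rw [hFν y, integral_indicator_const (1:ℝ) measurableSet_Iic, smul_eq_mul, mul_one]; rfl
  have hind_int : Integrable (fun x => Set.indicator (Set.Iic y) (fun _ => (1:ℝ)) x) ν :=
    (integrable_const (1:ℝ)).indicator measurableSet_Iic
  have hg_int : Integrable (fun x => gsm h (y - x)) ν := by
    refine Integrable.mono' (integrable_const (1:ℝ)) hgmeas.aestronglyMeasurable
      (Filter.Eventually.of_forall fun x => ?_)
    rw [Real.norm_eq_abs, abs_of_nonneg (hgmem _).1]
    exact (hgmem _).2
  have hφbd : ∀ x, |φ x| ≤ Set.indicator (Set.Icc (y - h) (y + h)) (fun _ => (1:ℝ)) x := by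
    intro x
    by_cases hx : x ∈ Set.Icc (y - h) (y + h)
    · rw [Set.indicator_of_mem hx, hφ]
      simp only
      have hg0 := (hgmem (y - x)).1
      have hg1 := (hgmem (y - x)).2
      by_cases hxy : x ≤ y
      · rw [Set.indicator_of_mem (Set.mem_Iic.mpr hxy)]
        rw [abs_le]; constructor <;> linarith
      · rw [Set.indicator_of_notMem (by simpa using hxy)]
        rw [abs_le]; constructor <;> linarith
    · rw [Set.indicator_of_notMem hx, hφ]
      simp only
      rw [Set.mem_Icc] at hx
      push_neg at hx
      by_cases hx1 : y - h ≤ x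
      · have hx2 : y + h < x := hx hx1
        have : (y - x) / h < -1 := by
          rw [div_lt_iff₀ hhpos]; linarith
        rw [Set.indicator_of_notMem (by simp; linarith), gsm, gfun_zero this]
        simp
      · push_neg at hx1
        have : (1:ℝ) ≤ (y - x) / h := by
          rw [le_div_iff₀ hhpos]; linarith
        rw [Set.indicator_of_mem (Set.mem_Iic.mpr (by linarith)), gsm, gfun_one this]
        simp
  have hνIcc : (ν (Set.Icc (y - h) (y + h))).toReal ≤ cf * (2 * h) := by
    have hb : ν (Set.Icc (y - h) (y + h)) ≤ ENNReal.ofReal (cf * (2 * h)) := by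
      rw [hν, hdens i, withDensity_apply _ measurableSet_Icc]
      calc ∫⁻ x in Set.Icc (y - h) (y + h), ENNReal.ofReal (f i x)
          ≤ ∫⁻ _ in Set.Icc (y - h) (y + h), ENNReal.ofReal cf := by
            refine setLIntegral_mono (by fun_prop) fun x _ => ?_
            exact ENNReal.ofReal_le_ofReal (le_trans (le_abs_self _) (hfbd i x))
        _ = ENNReal.ofReal cf * MeasureTheory.volume (Set.Icc (y - h) (y + h)) := by
            rw [setLIntegral_const, mul_comm]
        _ = ENNReal.ofReal (cf * (2 * h)) := by
            rw [Real.volume_Icc, ← ENNReal.ofReal_mul hcf.le]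
            congr 1; ring
    exact ENNReal.toReal_le_of_le_ofReal (by positivity) hb
  have hpart2 : |F i y - ∫ x, gsm h (y - x) ∂ν| ≤ cf * (2 * h) := by
    have hφint : Integrable φ ν := hind_int.sub hg_int
    have hsub : F i y - ∫ x, gsm h (y - x) ∂ν = ∫ x, φ x ∂ν := by
      rw [hFy, ← integral_sub hind_int hg_int]
    rw [hsub]
    refine le_trans (by simpa [Real.norm_eq_abs] using norm_integral_le_integral_norm (μ := ν) φ) ?_
    calc ∫ x, |φ x| ∂ν
        ≤ ∫ x, Set.indicator (Set.Icc (y - h) (y + h)) (fun _ => (1:ℝ)) x ∂ν := by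
          refine integral_mono hφint.abs
            ((integrable_const (1:ℝ)).indicator measurableSet_Icc) hφbd
      _ = (ν (Set.Icc (y - h) (y + h))).toReal := by
          rw [integral_indicator_const (1:ℝ) measurableSet_Icc, smul_eq_mul, mul_one]; rfl
      _ ≤ cf * (2 * h) := hνIcc
  have hfinal : F i Qi - (∫ ω, gsm h (y - X i (k+1) ω) ∂μ) + f i Qi * (y - Qi)
      = (F i Qi - F i y + f i Qi * (y - Qi)) + (F i y - ∫ x, gsm h (y - x) ∂ν) := by
    rw [hE]; ring
  have h2h : cf * (2 * h) = 2 * a * cf * gam cγ β k := by rw [hh]; ring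
  calc |F i Qi - (∫ ω, gsm h (y - X i (k+1) ω) ∂μ) + f i Qi * (y - Qi)|
      ≤ |F i Qi - F i y + f i Qi * (y - Qi)| + |F i y - ∫ x, gsm h (y - x) ∂ν| := by
        rw [hfinal]; exact abs_add_le _ _
    _ ≤ 2 * a * cf * gam cγ β k + cf * (y - Qi) ^ 2 := by
        rw [← h2h] at *; linarith [hpart1, hpart2]
end
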